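/- Let b_1,...,b_s and c_1,...,c_s be real numbers satisfying the order conditions for the multi-indices (1), (2) and (1,2), namely Σ_i b_i = 1, Σ_i b_i c_i = 1/2, and Σ_i (1/2) b_i^2 c_i + Σ_{i<j} b_i b_j c_j = 1/3. Then the order condition for the multi-index (2,1) also holds: Σ_i (1/2) b_i^2 c_i + Σ_{i<j} b_i b_j c_i = 1/6. -/

import Mathlib

lemma key_sum (b c : ℕ → ℝ) (s : ℕ) :
    (∑ i ∈ Finset.Icc 1 s, b i) * (∑ i ∈ Finset.Icc 1 s, b i * c i)
      = ∑ i ∈ Finset.Icc 1 s, b i ^ 2 * c i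
        + ∑ i ∈ Finset.Icc 1 s, ∑ j ∈ Finset.Icc (i + 1) s, b i * b j * c j
        + ∑ i ∈ Finset.Icc 1 s, ∑ j ∈ Finset.Icc (i + 1) s, b i * b j * c i := by
  induction s with
  | zero => simp
  | succ n ih =>
    have h1n : 1 ≤ n + 1 := Nat.succ_le_succ (Nat.zero_le n)
    rw [Finset.sum_Icc_succ_top h1n, Finset.sum_Icc_succ_top h1n,
        Finset.sum_Icc_succ_top h1n, Finset.sum_Icc_succ_top h1n,
        Finset.sum_Icc_succ_top h1n]
    have hempty : Finset.Icc (n + 1 + 1) (n + 1) = ∅ := by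
      apply Finset.Icc_eq_empty; omega
    rw [hempty, Finset.sum_empty, Finset.sum_empty]
    have hinner1 : ∀ i ∈ Finset.Icc 1 n,
        ∑ j ∈ Finset.Icc (i + 1) (n + 1), b i * b j * c j
          = (∑ j ∈ Finset.Icc (i + 1) n, b i * b j * c j)
            + b i * b (n + 1) * c (n + 1) := by
      intro i hi
      have : i + 1 ≤ n + 1 := Nat.succ_le_succ (Finset.mem_Icc.mp hi).2
      rw [Finset.sum_Icc_succ_top this]
    have hinner2 : ∀ i ∈ Finset.Icc 1 n,
        ∑ j ∈ Finset.Icc (i + 1) (n + 1), b i * b j * c i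
          = (∑ j ∈ Finset.Icc (i + 1) n, b i * b j * c i)
            + b i * b (n + 1) * c i := by
      intro i hi
      have : i + 1 ≤ n + 1 := Nat.succ_le_succ (Finset.mem_Icc.mp hi).2
      rw [Finset.sum_Icc_succ_top this]
    rw [Finset.sum_congr rfl hinner1, Finset.sum_congr rfl hinner2,
        Finset.sum_add_distrib, Finset.sum_add_distrib]
    have e1 : ∑ i ∈ Finset.Icc 1 n, b i * b (n + 1) * c (n + 1)
        = (∑ i ∈ Finset.Icc 1 n, b i) * (b (n + 1) * c (n + 1)) := by
      rw [Finset.sum_mul]; apply Finset.sum_congr rfl; intros; ring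
    have e2 : ∑ i ∈ Finset.Icc 1 n, b i * b (n + 1) * c i
        = (∑ i ∈ Finset.Icc 1 n, b i * c i) * b (n + 1) := by
      rw [Finset.sum_mul]; apply Finset.sum_congr rfl; intros; ring
    rw [e1, e2]
    nlinarith [ih]

/-- The generalized order condition for the multi-index (2,1) is implied by the order
conditions for the multi-indices (1), (2) and (1,2). -/
theorem stmt_6 (s : ℕ) (b c : ℕ → ℝ)
    (h1 : ∑ i ∈ Finset.Icc 1 s, b i = 1)
    (h2 : ∑ i ∈ Finset.Icc 1 s, b i * c i = 1 / 2)
    (h12 : (∑ i ∈ Finset.Icc 1 s, (1 / 2) * b i ^ 2 * c i)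
        + ∑ i ∈ Finset.Icc 1 s, ∑ j ∈ Finset.Icc (i + 1) s, b i * b j * c j = 1 / 3) :
    (∑ i ∈ Finset.Icc 1 s, (1 / 2) * b i ^ 2 * c i)
        + ∑ i ∈ Finset.Icc 1 s, ∑ j ∈ Finset.Icc (i + 1) s, b i * b j * c i = 1 / 6 := by
  have hk := key_sum b c s
  rw [h1, h2] at hk
  have hd : ∑ i ∈ Finset.Icc 1 s, b i ^ 2 * c i
      = 2 * ∑ i ∈ Finset.Icc 1 s, (1 / 2) * b i ^ 2 * c i := by
    rw [Finset.mul_sum]; apply Finset.sum_congr rfl; intros; ring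
  rw [hd] at hk
  linarith
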